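/- arXiv:1509.00703 — 2 statements merged into one kernel-verified Lean document; each statement's English description precedes it below -/
import Mathlib

section
/- With the setup of the affine-curvature relation κ = λu + α along an elastica: define θ_u by cos θ_u = (λ₂ cos θ − λ₁ sin θ)/λ and sin θ_u = (λ₁ cos θ + λ₂ sin θ)/λ. Then du/ds = cos θ_u, and there is a constant β such that sin θ_u(s) = (1/2)λ u(s)² + α u(s) + β for all s. In other words, sin θ_u is a quadratic polynomial in u along the curve. -/
open Real

/-- Along an elastica, `du/ds = cos θ_u` and `sin θ_u` is a quadratic polynomial in `u`. -/
theorem sin_theta_u_quadratic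
    (x y θ : ℝ → ℝ) (lam1 lam2 : ℝ)
    (hx : ContDiff ℝ 3 x) (hy : ContDiff ℝ 3 y) (hθ : ContDiff ℝ 2 θ)
    (hx' : ∀ s, deriv x s = Real.cos (θ s))
    (hy' : ∀ s, deriv y s = Real.sin (θ s))
    (hEL : ∀ s, deriv (deriv θ) s + lam1 * Real.sin (θ s) - lam2 * Real.cos (θ s) = 0)
    (lam : ℝ) (hlam : lam = Real.sqrt (lam1^2 + lam2^2)) (hlampos : 0 < lam)
    (u : ℝ → ℝ) (hu : ∀ s, u s = (lam2 * x s - lam1 * y s) / lam)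
    (α : ℝ) (hκ : ∀ s, deriv θ s = lam * u s + α)
    (cosθu sinθu : ℝ → ℝ)
    (hcos : ∀ s, cosθu s = (lam2 * Real.cos (θ s) - lam1 * Real.sin (θ s)) / lam)
    (hsin : ∀ s, sinθu s = (lam1 * Real.cos (θ s) + lam2 * Real.sin (θ s)) / lam) :
    (∀ s, deriv u s = cosθu s) ∧
    (∃ β : ℝ, ∀ s, sinθu s = (1/2) * lam * (u s)^2 + α * u s + β) := by
  have hxd : Differentiable ℝ x := hx.differentiable (by norm_num)
  have hyd : Differentiable ℝ y := hy.differentiable (by norm_num)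
  have hθd : Differentiable ℝ θ := hθ.differentiable (by norm_num)
  have hueq : u = fun s => (lam2 * x s - lam1 * y s) / lam := funext hu
  have hu' : ∀ s, HasDerivAt u (cosθu s) s := by
    intro s
    rw [hueq, hcos]
    have h1 : HasDerivAt x (Real.cos (θ s)) s := by
      have := (hxd s).hasDerivAt
      rwa [hx' s] at this
    have h2 : HasDerivAt y (Real.sin (θ s)) s := by
      have := (hyd s).hasDerivAt
      rwa [hy' s] at this
    exact ((h1.const_mul lam2).sub (h2.const_mul lam1)).div_const lam
  have hderivu : ∀ s, deriv u s = cosθu s := fun s => (hu' s).deriv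
  refine ⟨hderivu, ?_⟩
  -- F := sinθu - quadratic; show deriv F = 0
  have hsineq : sinθu = fun s => (lam1 * Real.cos (θ s) + lam2 * Real.sin (θ s)) / lam :=
    funext hsin
  set F : ℝ → ℝ := fun s => sinθu s - ((1/2) * lam * (u s)^2 + α * u s) with hF
  have hF' : ∀ s, HasDerivAt F 0 s := by
    intro s
    have hθ' : HasDerivAt θ (lam * u s + α) s := by
      have := (hθd s).hasDerivAt
      rwa [hκ s] at this
    have hsin' : HasDerivAt sinθu (cosθu s * (lam * u s + α)) s := by
      rw [hsineq, hcos]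
      have hc : HasDerivAt (fun s => Real.cos (θ s)) (-Real.sin (θ s) * (lam * u s + α)) s :=
        (Real.hasDerivAt_cos (θ s)).comp s hθ'
      have hs : HasDerivAt (fun s => Real.sin (θ s)) (Real.cos (θ s) * (lam * u s + α)) s :=
        (Real.hasDerivAt_sin (θ s)).comp s hθ'
      have := ((hc.const_mul lam1).fun_add (hs.const_mul lam2)).div_const lam
      refine this.congr_deriv ?_
      ring
    have hq : HasDerivAt (fun s => (1/2) * lam * (u s)^2 + α * u s)
        (cosθu s * (lam * u s + α)) s := by
      have h1 : HasDerivAt (fun s => (u s)^2) (2 * u s * cosθu s) s := by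
        simpa using (hu' s).fun_pow 2
      have := ((h1.const_mul ((1/2) * lam)).fun_add ((hu' s).const_mul α))
      refine this.congr_deriv ?_
      ring
    have := hsin'.sub hq
    rw [sub_self] at this
    exact this
  have hFd : Differentiable ℝ F := fun s => (hF' s).differentiableAt
  have hconst : ∀ s, F s = F 0 := by
    intro s
    exact is_const_of_deriv_eq_zero hFd (fun t => (hF' t).deriv) s 0
  refine ⟨sinθu 0 - ((1/2) * lam * (u 0)^2 + α * u 0), fun s => ?_⟩
  have := hconst s
  simp only [hF] at this
  linarith
end

section
/- Let k ∈ (0,1) and define ζ_k(s) = (2E(s,k) − s, 2k(1 − cn(s,k))), where E(s,k) = ∫₀^s dn²(u,k) du. Then the tangent angle θ(s) of ζ_k, defined by ζ_k'(s) = (cos θ(s), sin θ(s)) with θ(0) = 0, satisfies θ''(s) = −sin θ(s) and θ'(0) = 2k. In particular ζ_k is parameterized by arclength: ‖ζ_k'(s)‖ = 1 for all s. -/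
open Real intervalIntegral

/-- The tangent angle of the basic elastica `ζ_k` satisfies the pendulum equation,
with `θ'(0) = 2k`, and `ζ_k` is parameterized by arclength. -/
theorem basic_elastica_pendulum
    (k : ℝ) (hk : k ∈ Set.Ioo (0:ℝ) 1)
    (sn cn dn : ℝ → ℝ)
    (hsn : ∀ u, HasDerivAt sn (cn u * dn u) u)
    (hcn : ∀ u, HasDerivAt cn (-(sn u * dn u)) u)
    (hdn : ∀ u, HasDerivAt dn (-(k^2 * (sn u * cn u))) u)
    (hsn0 : sn 0 = 0) (hcn0 : cn 0 = 1) (hdn0 : dn 0 = 1)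
    (E ζ₁ ζ₂ : ℝ → ℝ)
    (hE : ∀ s, E s = ∫ u in (0:ℝ)..s, (dn u)^2)
    (hζ₁ : ∀ s, ζ₁ s = 2 * E s - s)
    (hζ₂ : ∀ s, ζ₂ s = 2 * k * (1 - cn s))
    (θ : ℝ → ℝ) (hθ : ContDiff ℝ 2 θ) (hθ0 : θ 0 = 0)
    (htan : ∀ s, deriv ζ₁ s = Real.cos (θ s) ∧ deriv ζ₂ s = Real.sin (θ s)) :
    (∀ s, deriv (deriv θ) s = - Real.sin (θ s)) ∧ deriv θ 0 = 2 * k ∧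
      (∀ s, (deriv ζ₁ s)^2 + (deriv ζ₂ s)^2 = 1) := by
  -- Pythagorean identity dn² + k² sn² = 1
  have hconstd : ∀ s, HasDerivAt (fun u => dn u ^ 2 + k ^ 2 * sn u ^ 2) 0 s := by
    intro s
    have h1 := ((hdn s).pow 2).add (((hsn s).pow 2).const_mul (k ^ 2))
    refine h1.congr_deriv ?_
    ring
  have hdiff : Differentiable ℝ (fun u => dn u ^ 2 + k ^ 2 * sn u ^ 2) :=
    fun s => (hconstd s).differentiableAt
  have hpy : ∀ s, dn s ^ 2 + k ^ 2 * sn s ^ 2 = 1 := by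
    intro s
    have := is_const_of_deriv_eq_zero hdiff (fun x => (hconstd x).deriv) s 0
    simpa [hsn0, hdn0] using this
  -- derivative of E
  have hdncont : Continuous dn := Differentiable.continuous (fun s => (hdn s).differentiableAt)
  have hcont : Continuous (fun u => dn u ^ 2) := hdncont.pow 2
  have hEfun : E = fun s => ∫ u in (0:ℝ)..s, (dn u)^2 := funext hE
  have hE' : ∀ s, HasDerivAt E (dn s ^ 2) s := by
    intro s
    rw [hEfun]
    exact intervalIntegral.integral_hasDerivAt_right
      (hcont.intervalIntegrable _ _)
      (hcont.stronglyMeasurableAtFilter _ _)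
      hcont.continuousAt
  -- derivatives of ζ₁, ζ₂
  have hζ₁fun : ζ₁ = fun s => 2 * E s - s := funext hζ₁
  have hζ₂fun : ζ₂ = fun s => 2 * k * (1 - cn s) := funext hζ₂
  have hζ₁' : ∀ s, HasDerivAt ζ₁ (2 * dn s ^ 2 - 1) s := by
    intro s
    rw [hζ₁fun]
    exact ((hE' s).const_mul 2).sub (hasDerivAt_id s)
  have hζ₂' : ∀ s, HasDerivAt ζ₂ (2 * k * (sn s * dn s)) s := by
    intro s
    rw [hζ₂fun]
    have := ((hasDerivAt_const s (1:ℝ)).sub (hcn s)).const_mul (2 * k)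
    refine this.congr_deriv ?_
    ring
  have hcosθ : ∀ s, Real.cos (θ s) = 2 * dn s ^ 2 - 1 := by
    intro s
    rw [← (htan s).1, (hζ₁' s).deriv]
  have hsinθ : ∀ s, Real.sin (θ s) = 2 * k * (sn s * dn s) := by
    intro s
    rw [← (htan s).2, (hζ₂' s).deriv]
  -- θ is differentiable with derivative 2k cn
  have hθdiff : Differentiable ℝ θ := hθ.differentiable (by norm_num)
  have hθ' : ∀ s, deriv θ s = 2 * k * cn s := by
    intro s
    have hθd : HasDerivAt θ (deriv θ s) s := (hθdiff s).hasDerivAt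
    -- derivative of sin ∘ θ two ways
    have hs1 : HasDerivAt (fun u => Real.sin (θ u)) (Real.cos (θ s) * deriv θ s) s := hθd.sin
    have hs2 : HasDerivAt (fun u => Real.sin (θ u))
        (2 * k * ((cn s * dn s) * dn s + sn s * (-(k ^ 2 * (sn s * cn s))))) s := by
      have heq : (fun u => Real.sin (θ u)) = fun u => 2 * k * (sn u * dn u) := funext hsinθ
      rw [heq]
      exact ((hsn s).mul (hdn s)).const_mul (2 * k)
    have e1 : Real.cos (θ s) * deriv θ s
        = 2 * k * ((cn s * dn s) * dn s + sn s * (-(k ^ 2 * (sn s * cn s)))) :=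
      hs1.unique hs2
    have hc1 : HasDerivAt (fun u => Real.cos (θ u)) (-Real.sin (θ s) * deriv θ s) s := hθd.cos
    have hc2 : HasDerivAt (fun u => Real.cos (θ u))
        (2 * (2 * dn s) * (-(k ^ 2 * (sn s * cn s)))) s := by
      have heq : (fun u => Real.cos (θ u)) = fun u => 2 * dn u ^ 2 - 1 := funext hcosθ
      rw [heq]
      have := (((hdn s).pow 2).const_mul 2).sub (hasDerivAt_const s (1:ℝ))
      refine this.congr_deriv ?_
      ring
    have e2 : -Real.sin (θ s) * deriv θ s = 2 * (2 * dn s) * (-(k ^ 2 * (sn s * cn s))) :=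
      hc1.unique hc2
    have pyth := Real.sin_sq_add_cos_sq (θ s)
    rw [hcosθ s] at e1
    rw [hsinθ s] at e2
    rw [hcosθ s, hsinθ s] at pyth
    have hu := hpy s
    linear_combination (2 * dn s ^ 2 - 1) * e1 - (2 * k * sn s * dn s) * e2
      + (2 * k * cn s - deriv θ s) * pyth - 2 * k * cn s * (2 * dn s ^ 2 - 1) * hu
  have hθ'fun : deriv θ = fun s => 2 * k * cn s := funext hθ'
  refine ⟨?_, ?_, ?_⟩
  · intro s
    have : HasDerivAt (deriv θ) (2 * k * (-(sn s * dn s))) s := by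
      rw [hθ'fun]
      exact (hcn s).const_mul (2 * k)
    rw [this.deriv, hsinθ s]
    ring
  · rw [hθ' 0, hcn0]; ring
  · intro s
    rw [(hζ₁' s).deriv, (hζ₂' s).deriv]
    nlinarith [hpy s]
end
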